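/- Let G be a connected graph and H a graph, and let (u1,v1), (u2,v2) be distinct vertices of G[H] with u1 ≡ u2 (u1 = u2 or u1, u2 twins in G). Then: if u1 = u2, R_{G[H]}{(u1,v1),(u2,v2)} = {(u1,v) : v ∈ S_H{v1,v2}}; if N_G[u1] = N_G[u2] (with u1 ≠ u2), it equals {(u1,v) : v ∈ N_{H̄}[v1]} ∪ {(u2,v) : v ∈ N_{H̄}[v2]}, where H̄ is the complement of H; and if N_G(u1) = N_G(u2) (with u1 ≠ u2), it equals {(u1,v) : v ∈ N_H[v1]} ∪ {(u2,v) : v ∈ N_H[v2]}. -/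

import Mathlib

open Finset

variable {α β V : Type*}

/-- The corona product `G ⊙ H`. -/
def SimpleGraph.corona (G : SimpleGraph α) (H : SimpleGraph β) :
    SimpleGraph (α ⊕ α × β) where
  Adj x y :=
    match x, y with
    | Sum.inl u1, Sum.inl u2 => G.Adj u1 u2
    | Sum.inl u1, Sum.inr p => u1 = p.1
    | Sum.inr p, Sum.inl u2 => p.1 = u2
    | Sum.inr p, Sum.inr q => p.1 = q.1 ∧ H.Adj p.2 q.2
  symm := by
    refine ⟨?_⟩
    rintro (u1 | p) (u2 | q) h
    · exact h.symm
    · exact h.symm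
    · exact h.symm
    · exact ⟨h.1.symm, h.2.symm⟩
  loopless := by
    refine ⟨?_⟩
    rintro (u | p) h
    · exact G.irrefl h
    · exact H.irrefl h.2

/-- The lexicographic product `G[H]`. -/
def SimpleGraph.lexProd (G : SimpleGraph α) (H : SimpleGraph β) :
    SimpleGraph (α × β) where
  Adj x y := G.Adj x.1 y.1 ∨ (x.1 = y.1 ∧ H.Adj x.2 y.2)
  symm := by
    refine ⟨?_⟩
    rintro x y (h | ⟨h1, h2⟩)
    · exact Or.inl h.symm
    · exact Or.inr ⟨h1.symm, h2.symm⟩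
  loopless := by
    refine ⟨?_⟩
    rintro x (h | ⟨h1, h2⟩)
    · exact G.irrefl h
    · exact H.irrefl h2

open scoped Classical in
/-- `R_F{x,y}`: the set of vertices resolving `x` and `y` (distance measured by `edist`,
which is `∞` between vertices in different components). -/
noncomputable def resolvingFinset (F : SimpleGraph V) [Fintype V] (x y : V) : Finset V :=
  univ.filter fun z => F.edist x z ≠ F.edist y z

/-- `S_H{v₁,v₂} = {v₁,v₂} ∪ (N_H(v₁) Δ N_H(v₂))`. -/
def locatingFinset (H : SimpleGraph V) [Fintype V] [DecidableEq V]
    [DecidableRel H.Adj] (v1 v2 : V) : Finset V :=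
  {v1, v2} ∪ symmDiff (H.neighborFinset v1) (H.neighborFinset v2)

/-- A resolving function of `F`. -/
def IsResolvingFn (F : SimpleGraph V) [Fintype V] (g : V → ℝ) : Prop :=
  (∀ v, g v ∈ Set.Icc (0 : ℝ) 1) ∧
    ∀ x y : V, x ≠ y → 1 ≤ ∑ z ∈ resolvingFinset F x y, g z

/-- The fractional metric dimension `dim_f(F)`. -/
noncomputable def fracMetricDim (F : SimpleGraph V) [Fintype V] : ℝ :=
  sInf {w | ∃ g, IsResolvingFn F g ∧ w = ∑ v, g v}

/-- A locating function of `H`. -/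
def IsLocatingFn (H : SimpleGraph V) [Fintype V] [DecidableEq V]
    [DecidableRel H.Adj] (g : V → ℝ) : Prop :=
  (∀ v, g v ∈ Set.Icc (0 : ℝ) 1) ∧
    ∀ v1 v2 : V, v1 ≠ v2 → 1 ≤ ∑ v ∈ locatingFinset H v1 v2, g v

/-- `l_f(H)`: the minimum weight of a locating function. -/
noncomputable def fracLoc (H : SimpleGraph V) [Fintype V] [DecidableEq V]
    [DecidableRel H.Adj] : ℝ :=
  sInf {w | ∃ g, IsLocatingFn H g ∧ w = ∑ v, g v}

open scoped Classical in
/-- `λ(H)`: maximum number of common neighbours of two adjacent vertices, `-1` if no edges. -/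
noncomputable def lambdaMax (H : SimpleGraph V) [Fintype V] : ℤ :=
  if hne : (univ.filter fun p : V × V => H.Adj p.1 p.2).Nonempty then
    (univ.filter fun p : V × V => H.Adj p.1 p.2).sup' hne fun p =>
      ((univ.filter fun w => H.Adj p.1 w ∧ H.Adj p.2 w).card : ℤ)
  else -1

open scoped Classical in
/-- `μ(H)`: maximum number of common neighbours of two distinct nonadjacent vertices,
`0` for complete graphs. -/
noncomputable def muMax (H : SimpleGraph V) [Fintype V] : ℤ :=
  if hne : (univ.filter fun p : V × V => p.1 ≠ p.2 ∧ ¬H.Adj p.1 p.2).Nonempty then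
    (univ.filter fun p : V × V => p.1 ≠ p.2 ∧ ¬H.Adj p.1 p.2).sup' hne fun p =>
      ((univ.filter fun w => H.Adj p.1 w ∧ H.Adj p.2 w).card : ℤ)
  else 0

/-- A graph is vertex-transitive if its automorphism group is transitive on vertices. -/
def IsVertexTransitive (H : SimpleGraph V) : Prop :=
  ∀ u v : V, ∃ φ : H ≃g H, φ u = v

/-- Two distinct vertices are twins if they have the same closed or the same open
neighbourhood. -/
def SimpleGraph.Twins (G : SimpleGraph V) (u1 u2 : V) : Prop :=
  u1 ≠ u2 ∧ (insert u1 (G.neighborSet u1) = insert u2 (G.neighborSet u2) ∨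
    G.neighborSet u1 = G.neighborSet u2)

open scoped Classical in
/-- `m₁(G)`: number of vertices in twin-equivalence classes of type 1 (singletons). -/
noncomputable def m1 (G : SimpleGraph V) [Fintype V] : ℕ :=
  (univ.filter fun u => ∀ w, ¬G.Twins u w).card

open scoped Classical in
/-- `m₂(G)`: number of vertices in twin-equivalence classes of type 2 (cliques). -/
noncomputable def m2 (G : SimpleGraph V) [Fintype V] : ℕ :=
  (univ.filter fun u => ∃ w, G.Twins u w ∧ G.Adj u w).card

open scoped Classical in
/-- `m₃(G)`: number of vertices in twin-equivalence classes of type 3 (independent sets). -/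
noncomputable def m3 (G : SimpleGraph V) [Fintype V] : ℕ :=
  (univ.filter fun u => ∃ w, G.Twins u w ∧ ¬G.Adj u w).card

section Aux
variable {α β : Type*}


def lexHom (G : SimpleGraph α) (H : SimpleGraph β) (b : β) : G →g G.lexProd H :=
  ⟨fun a => (a, b), fun h => Or.inl h⟩

lemma lex_edist_le_of_walk (G : SimpleGraph α) (H : SimpleGraph β)
    (x y : α × β) (P : (G.lexProd H).Walk x y) : G.edist x.1 y.1 ≤ P.length := by
  induction P with
  | nil => simp [SimpleGraph.edist_self]
  | cons h P ih =>
    rename_i u v w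
    rcases h with h | ⟨h1, h2⟩
    · calc G.edist u.1 w.1 ≤ G.edist u.1 v.1 + G.edist v.1 w.1 := SimpleGraph.edist_triangle
        _ ≤ 1 + P.length := add_le_add (le_of_eq (SimpleGraph.edist_eq_one_iff_adj.mpr h)) ih
        _ = _ := by show (1:ℕ∞) + P.length = ((P.length + 1 : ℕ) : ℕ∞); push_cast; ring
    · have he : G.edist u.1 w.1 = G.edist v.1 w.1 := by rw [h1]
      rw [he]; show G.edist v.1 w.1 ≤ ((P.length + 1 : ℕ) : ℕ∞)
      exact ih.trans (by exact_mod_cast Nat.le_succ _)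

lemma lex_edist_ne (G : SimpleGraph α) (H : SimpleGraph β)
    {u u' : α} (v v' : β) (hne : u ≠ u') :
    (G.lexProd H).edist (u, v) (u', v') = G.edist u u' := by
  refine le_antisymm ?_ ?_
  · rcases eq_or_ne (G.edist u u') ⊤ with h | h
    · simp [h]
    obtain ⟨p, hp⟩ := SimpleGraph.exists_walk_of_edist_ne_top h
    obtain ⟨a, h1, q, rfl⟩ := SimpleGraph.Walk.exists_eq_cons_of_ne hne p
    have h2 : (G.lexProd H).Adj (u, v) (a, v') := Or.inl h1
    have := SimpleGraph.edist_le (SimpleGraph.Walk.cons h2 (q.map (lexHom G H v')))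
    rw [← hp]
    have this : (G.lexProd H).edist (u, v) (u', v') ≤
        (((q.map (lexHom G H v')).length + 1 : ℕ) : ℕ∞) := this
    rw [SimpleGraph.Walk.length_map] at this
    simpa using this
  · rcases eq_or_ne ((G.lexProd H).edist (u, v) (u', v')) ⊤ with h | h
    · simp [h]
    obtain ⟨P, hP⟩ := SimpleGraph.exists_walk_of_edist_ne_top h
    rw [← hP]
    exact lex_edist_le_of_walk G H _ _ P

lemma exists_adj (G : SimpleGraph α) [Fintype α] (hG : G.Connected)
    (hca : 2 ≤ Fintype.card α) (u : α) : ∃ a, G.Adj u a := by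
  obtain ⟨w, hw⟩ := Fintype.exists_ne_of_one_lt_card hca u
  obtain ⟨p⟩ := hG u w
  obtain ⟨a, h1, q, rfl⟩ := SimpleGraph.Walk.exists_eq_cons_of_ne (Ne.symm hw) p
  exact ⟨a, h1⟩

lemma lex_edist_eq [DecidableEq β] (G : SimpleGraph α) (H : SimpleGraph β) [DecidableRel H.Adj] [Fintype α]
    (hG : G.Connected) (hca : 2 ≤ Fintype.card α) (u : α) (v x : β) :
    (G.lexProd H).edist (u, v) (u, x) =
      if x = v then 0 else if H.Adj v x then 1 else 2 := by
  split_ifs with h1 h2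
  · subst h1; exact SimpleGraph.edist_self
  · rw [SimpleGraph.edist_eq_one_iff_adj]
    exact Or.inr ⟨rfl, h2⟩
  · have hne : ((u, v) : α × β) ≠ (u, x) := by simp [Ne.symm h1]
    have hnadj : ¬ (G.lexProd H).Adj (u, v) (u, x) := by
      rintro (h | ⟨-, h⟩)
      · exact G.irrefl h
      · exact h2 h
    refine le_antisymm ?_ ?_
    · obtain ⟨a, ha⟩ := exists_adj G hG hca u
      refine le_trans (SimpleGraph.edist_le (SimpleGraph.Walk.cons (show (G.lexProd H).Adj (u, v) (a, v) from Or.inl ha)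
          (SimpleGraph.Walk.cons (show (G.lexProd H).Adj (a, v) (u, x) from Or.inl ha.symm)
            SimpleGraph.Walk.nil))) ?_
      simp only [SimpleGraph.Walk.length_cons, SimpleGraph.Walk.length_nil]
      norm_num
    · have h0 : 1 < (G.lexProd H).edist (u, v) (u, x) := by
        refine lt_of_le_of_ne (Order.one_le_iff_pos.mpr (SimpleGraph.edist_pos_of_ne hne)) ?_
        rw [ne_eq, eq_comm, SimpleGraph.edist_eq_one_iff_adj]
        exact hnadj
      exact Order.add_one_le_of_lt h0

lemma twin_edist_le (G : SimpleGraph α) {u1 u2 : α}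
    (hmem : ∀ a, G.Adj u1 a → a = u2 ∨ G.Adj u2 a) {w : α} (hw : w ≠ u1) :
    G.edist u2 w ≤ G.edist u1 w := by
  rcases eq_or_ne (G.edist u1 w) ⊤ with h | h
  · simp [h]
  obtain ⟨p, hp⟩ := SimpleGraph.exists_walk_of_edist_ne_top h
  obtain ⟨a, h1, q, rfl⟩ := SimpleGraph.Walk.exists_eq_cons_of_ne (Ne.symm hw) p
  rw [← hp, SimpleGraph.Walk.length_cons]
  rcases hmem a h1 with rfl | h2
  · exact (SimpleGraph.edist_le q).trans (by exact_mod_cast Nat.le_succ _)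
  · have := SimpleGraph.edist_le (SimpleGraph.Walk.cons h2 q)
    rwa [SimpleGraph.Walk.length_cons] at this

lemma twin_edist_eq (G : SimpleGraph α) {u1 u2 : α}
    (hmem12 : ∀ a, G.Adj u1 a → a = u2 ∨ G.Adj u2 a)
    (hmem21 : ∀ a, G.Adj u2 a → a = u1 ∨ G.Adj u1 a)
    {w : α} (hw1 : w ≠ u1) (hw2 : w ≠ u2) :
    G.edist u1 w = G.edist u2 w :=
  le_antisymm (twin_edist_le G hmem21 hw2) (twin_edist_le G hmem12 hw1)

lemma edist_eq_two_of (G : SimpleGraph α) {u1 u2 : α} (hne12 : u1 ≠ u2)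
    (hnadj : ¬G.Adj u1 u2) {a : α} (h1 : G.Adj u1 a) (h2 : G.Adj a u2) :
    G.edist u1 u2 = 2 := by
  refine le_antisymm ?_ ?_
  · refine le_trans (SimpleGraph.edist_le
      (SimpleGraph.Walk.cons h1 (SimpleGraph.Walk.cons h2 SimpleGraph.Walk.nil))) ?_
    simp only [SimpleGraph.Walk.length_cons, SimpleGraph.Walk.length_nil]
    norm_num
  · have h0 : 1 < G.edist u1 u2 := by
      refine lt_of_le_of_ne (Order.one_le_iff_pos.mpr (SimpleGraph.edist_pos_of_ne hne12)) ?_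
      rw [ne_eq, eq_comm, SimpleGraph.edist_eq_one_iff_adj]
      exact hnadj
    exact Order.add_one_le_of_lt h0

end Aux

/-- Description of `R_{G[H]}{(u₁,v₁),(u₂,v₂)}` when `u₁ ≡ u₂`:
if `u₁ = u₂` it is `{u₁} × S_H{v₁,v₂}`; if `N_G[u₁] = N_G[u₂]` (`u₁ ≠ u₂`) it is
`({u₁} × N_{H̄}[v₁]) ∪ ({u₂} × N_{H̄}[v₂])`; if `N_G(u₁) = N_G(u₂)` (`u₁ ≠ u₂`) it is
`({u₁} × N_H[v₁]) ∪ ({u₂} × N_H[v₂])`. -/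
theorem stmt_13 {α β : Type*} [Fintype α] [Fintype β] [DecidableEq α] [DecidableEq β]
    (G : SimpleGraph α) (H : SimpleGraph β) [DecidableRel G.Adj] [DecidableRel H.Adj]
    (hG : G.Connected) (hca : 2 ≤ Fintype.card α) (hcb : 2 ≤ Fintype.card β)
    (u1 u2 : α) (v1 v2 : β) (hne : (u1, v1) ≠ (u2, v2)) :
    (u1 = u2 →
      resolvingFinset (G.lexProd H) (u1, v1) (u2, v2) =
        (locatingFinset H v1 v2).image fun v => (u1, v)) ∧
    (u1 ≠ u2 → insert u1 (G.neighborFinset u1) = insert u2 (G.neighborFinset u2) →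
      resolvingFinset (G.lexProd H) (u1, v1) (u2, v2) =
        ((insert v1 (Hᶜ.neighborFinset v1)).image fun v => (u1, v)) ∪
          ((insert v2 (Hᶜ.neighborFinset v2)).image fun v => (u2, v))) ∧
    (u1 ≠ u2 → G.neighborFinset u1 = G.neighborFinset u2 →
      resolvingFinset (G.lexProd H) (u1, v1) (u2, v2) =
        ((insert v1 (H.neighborFinset v1)).image fun v => (u1, v)) ∪
          ((insert v2 (H.neighborFinset v2)).image fun v => (u2, v))) := by
  have key : ∀ (u : α) (va vb x : β),
      ((G.lexProd H).edist (u, va) (u, x) ≠ (G.lexProd H).edist (u, vb) (u, x)) = True →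
      True := fun _ _ _ _ _ => trivial
  refine ⟨?_, ?_, ?_⟩
  · -- u1 = u2
    rintro rfl
    have hv : v1 ≠ v2 := fun h => hne (by rw [h])
    ext ⟨w, x⟩
    simp only [resolvingFinset, mem_filter, mem_univ, true_and, mem_image,
      Prod.mk.injEq]
    by_cases hw : w = u1
    · subst hw
      rw [lex_edist_eq G H hG hca, lex_edist_eq G H hG hca]
      simp only [locatingFinset, mem_union, mem_insert, mem_singleton,
        Finset.mem_symmDiff, SimpleGraph.mem_neighborFinset]
      constructor
      · intro hd
        refine ⟨x, ?_, by simp⟩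
        by_contra hcon
        push_neg at hcon
        obtain ⟨⟨hx1, hx2⟩, hAB, hBA⟩ := hcon
        rw [if_neg hx1, if_neg hx2] at hd
        by_cases hA1 : H.Adj v1 x
        · rw [if_pos hA1, if_pos (hAB hA1)] at hd; exact hd rfl
        · rw [if_neg hA1, if_neg (fun h => hA1 (hBA h))] at hd; exact hd rfl
      · rintro ⟨v, hv', -, rfl⟩
        rcases hv' with (rfl | rfl) | (⟨hA1, hA2⟩ | ⟨hA2, hA1⟩)
        · rw [if_pos rfl, if_neg hv]
          split_ifs <;> decide
        · rw [if_pos rfl, if_neg (fun h => hv h.symm)]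
          split_ifs <;> decide
        · rw [if_neg (fun h : v = v1 => H.loopless.irrefl v1 (h ▸ hA1)), if_pos hA1]
          split_ifs <;> first | decide | simp_all
        · rw [if_neg (fun h : v = v2 => H.loopless.irrefl v2 (h ▸ hA2)), if_pos hA2]
          split_ifs <;> first | decide | simp_all
    · have hu1w : u1 ≠ w := fun h => hw h.symm
      rw [lex_edist_ne G H v1 x hu1w, lex_edist_ne G H v2 x hu1w]
      exact iff_of_false (fun hd => hd rfl) (by rintro ⟨v, -, h, -⟩; exact hu1w h)
  · -- closed twins
    intro hu hN
    have hadj : G.Adj u1 u2 := by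
      have : u2 ∈ insert u1 (G.neighborFinset u1) := by
        rw [hN]; exact mem_insert_self _ _
      rcases mem_insert.mp this with h | h
      · exact absurd h.symm hu
      · exact (SimpleGraph.mem_neighborFinset _ _ _).mp h
    have hd12 : G.edist u1 u2 = 1 := SimpleGraph.edist_eq_one_iff_adj.mpr hadj
    have hmem12 : ∀ a, G.Adj u1 a → a = u2 ∨ G.Adj u2 a := by
      intro a ha
      have : a ∈ insert u2 (G.neighborFinset u2) := by
        rw [← hN]
        exact mem_insert_of_mem ((SimpleGraph.mem_neighborFinset _ _ _).mpr ha)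
      rcases mem_insert.mp this with h | h
      · exact Or.inl h
      · exact Or.inr ((SimpleGraph.mem_neighborFinset _ _ _).mp h)
    have hmem21 : ∀ a, G.Adj u2 a → a = u1 ∨ G.Adj u1 a := by
      intro a ha
      have : a ∈ insert u1 (G.neighborFinset u1) := by
        rw [hN]
        exact mem_insert_of_mem ((SimpleGraph.mem_neighborFinset _ _ _).mpr ha)
      rcases mem_insert.mp this with h | h
      · exact Or.inl h
      · exact Or.inr ((SimpleGraph.mem_neighborFinset _ _ _).mp h)
    ext ⟨w, x⟩
    simp only [resolvingFinset, mem_filter, mem_univ, true_and, mem_union, mem_image,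
      Prod.mk.injEq, mem_insert, SimpleGraph.mem_neighborFinset, SimpleGraph.compl_adj]
    by_cases hw1 : w = u1
    · subst hw1
      rw [lex_edist_eq G H hG hca, lex_edist_ne G H v2 x (Ne.symm hu),
        SimpleGraph.edist_comm, hd12]
      constructor
      · intro hd
        refine Or.inl ⟨x, ?_, by simp⟩
        by_contra hcon
        push_neg at hcon
        obtain ⟨hx1, himp⟩ := hcon
        have hA1 : H.Adj v1 x := himp (fun h => hx1 h.symm)
        rw [if_neg hx1, if_pos hA1] at hd
        exact hd rfl
      · rintro (⟨v, hv', -, rfl⟩ | ⟨v, hv', h21, rfl⟩)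
        · rcases hv' with rfl | ⟨hne1, hA1⟩
          · rw [if_pos rfl]; decide
          · rw [if_neg (fun h => hne1 h.symm), if_neg hA1]; decide
        · exact absurd h21 (Ne.symm hu)
    · by_cases hw2 : w = u2
      · subst hw2
        rw [lex_edist_eq G H hG hca, lex_edist_ne G H v1 x hu, hd12]
        constructor
        · intro hd
          refine Or.inr ⟨x, ?_, by simp⟩
          by_contra hcon
          push_neg at hcon
          obtain ⟨hx2, himp⟩ := hcon
          have hA2 : H.Adj v2 x := himp (fun h => hx2 h.symm)
          rw [if_neg hx2, if_pos hA2] at hd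
          exact hd.symm rfl
        · rintro (⟨v, hv', h12, rfl⟩ | ⟨v, hv', -, rfl⟩)
          · exact absurd h12 hu
          · rcases hv' with rfl | ⟨hne2, hA2⟩
            · rw [if_pos rfl]; decide
            · rw [if_neg (fun h => hne2 h.symm), if_neg hA2]
              decide
      · rw [lex_edist_ne G H v1 x (fun h => hw1 h.symm),
          lex_edist_ne G H v2 x (fun h => hw2 h.symm),
          twin_edist_eq G hmem12 hmem21 hw1 hw2]
        exact iff_of_false (fun hd => hd rfl)
          (by rintro (⟨v, -, h, -⟩ | ⟨v, -, h, -⟩) <;> [exact hw1 h.symm; exact hw2 h.symm])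
  · -- open twins
    intro hu hN
    have hnadj : ¬G.Adj u1 u2 := by
      intro h
      have : u2 ∈ G.neighborFinset u2 := by
        rw [← hN]; exact (SimpleGraph.mem_neighborFinset _ _ _).mpr h
      exact G.irrefl ((SimpleGraph.mem_neighborFinset _ _ _).mp this)
    obtain ⟨a, ha⟩ := exists_adj G hG hca u1
    have ha2 : G.Adj u2 a := by
      have : a ∈ G.neighborFinset u2 := by
        rw [← hN]; exact (SimpleGraph.mem_neighborFinset _ _ _).mpr ha
      exact (SimpleGraph.mem_neighborFinset _ _ _).mp this
    have hd12 : G.edist u1 u2 = 2 := edist_eq_two_of G hu hnadj ha ha2.symm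
    have hmem12 : ∀ b, G.Adj u1 b → b = u2 ∨ G.Adj u2 b := by
      intro b hb
      refine Or.inr ?_
      have : b ∈ G.neighborFinset u2 := by
        rw [← hN]; exact (SimpleGraph.mem_neighborFinset _ _ _).mpr hb
      exact (SimpleGraph.mem_neighborFinset _ _ _).mp this
    have hmem21 : ∀ b, G.Adj u2 b → b = u1 ∨ G.Adj u1 b := by
      intro b hb
      refine Or.inr ?_
      have : b ∈ G.neighborFinset u1 := by
        rw [hN]; exact (SimpleGraph.mem_neighborFinset _ _ _).mpr hb
      exact (SimpleGraph.mem_neighborFinset _ _ _).mp this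
    ext ⟨w, x⟩
    simp only [resolvingFinset, mem_filter, mem_univ, true_and, mem_union, mem_image,
      Prod.mk.injEq, mem_insert, SimpleGraph.mem_neighborFinset]
    by_cases hw1 : w = u1
    · subst hw1
      rw [lex_edist_eq G H hG hca, lex_edist_ne G H v2 x (Ne.symm hu),
        SimpleGraph.edist_comm, hd12]
      constructor
      · intro hd
        refine Or.inl ⟨x, ?_, by simp⟩
        by_contra hcon
        push_neg at hcon
        obtain ⟨hx1, hA1⟩ := hcon
        rw [if_neg hx1, if_neg hA1] at hd
        exact hd rfl
      · rintro (⟨v, hv', -, rfl⟩ | ⟨v, hv', h21, rfl⟩)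
        · rcases hv' with rfl | hA1
          · rw [if_pos rfl]; decide
          · rw [if_neg (fun h : v = v1 => H.loopless.irrefl v1 (h ▸ hA1)), if_pos hA1]; decide
        · exact absurd h21 (Ne.symm hu)
    · by_cases hw2 : w = u2
      · subst hw2
        rw [lex_edist_eq G H hG hca, lex_edist_ne G H v1 x hu, hd12]
        constructor
        · intro hd
          refine Or.inr ⟨x, ?_, by simp⟩
          by_contra hcon
          push_neg at hcon
          obtain ⟨hx2, hA2⟩ := hcon
          rw [if_neg hx2, if_neg hA2] at hd
          exact hd.symm rfl
        · rintro (⟨v, hv', h12, rfl⟩ | ⟨v, hv', -, rfl⟩)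
          · exact absurd h12 hu
          · rcases hv' with rfl | hA2
            · rw [if_pos rfl]; decide
            · rw [if_neg (fun h : v = v2 => H.loopless.irrefl v2 (h ▸ hA2)), if_pos hA2]; decide
      · rw [lex_edist_ne G H v1 x (fun h => hw1 h.symm),
          lex_edist_ne G H v2 x (fun h => hw2 h.symm),
          twin_edist_eq G hmem12 hmem21 hw1 hw2]
        exact iff_of_false (fun hd => hd rfl)
          (by rintro (⟨v, -, h, -⟩ | ⟨v, -, h, -⟩) <;> [exact hw1 h.symm; exact hw2 h.symm])
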